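/- (Theorem 2, class-2 strategies.) Under the hypotheses of Theorem 1 with Ψ_b(x) = (w(b)/(ℓ+1)) Π_{k=1}^{r} W(b,z_k) (so W independent of ℓ), writing G_{ba} = Σ_{z∈{0,...,c-b}\{b}} Γ(κ+z) W(b,z)/(τ_b^{az} z!), one has K_b = (b!(c-b)! w(b) / (q N_b Γ(κ+b) Γ(c-b+κ(q-1)) B(κ·1_{q-1}))) * Σ_{a=0}^{N_b-1} τ_b^{ac} [ (G_{ba}+v_{ba})^q − G_{ba}^q ]. -/

import Mathlib

open Finset

/-- Generalized Beta function `B(v) = (∏ Γ(v_a)) / Γ(∑ v_a)`. -/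
noncomputable def GBeta {n : ℕ} (v : Fin n → ℝ) : ℝ :=
  (∏ a, Real.Gamma (v a)) / Real.Gamma (∑ a, v a)

lemma count_aux (n b s : ℕ) (g : ℕ → ℂ) :
    ∑ y ∈ (Finset.Nat.antidiagonalTuple (n+1) (b+s)).filter (fun y => ∃ i, y i = b),
        ∏ i, g (y i)
    = (n+1) * g b *
      ∑ x ∈ Finset.Nat.antidiagonalTuple n s,
        (∏ i, g (x i)) / (((Finset.univ.filter (fun i => x i = b)).card : ℂ) + 1) := by
  have hcard : ∀ (i : Fin (n+1)) (x : Fin n → ℕ),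
      ((univ.filter (fun j => Fin.insertNth (α := fun _ => ℕ) i b x j = b)).card)
        = (univ.filter (fun j => x j = b)).card + 1 := by
    intro i x
    rw [Finset.card_filter, Finset.card_filter, Fin.sum_univ_succAbove _ i]
    simp [add_comm]
  have hprod : ∀ (i : Fin (n+1)) (x : Fin n → ℕ),
      (∏ j, g (Fin.insertNth (α := fun _ => ℕ) i b x j)) = g b * ∏ j, g (x j) := by
    intro i x
    rw [Fin.prod_univ_succAbove _ i]
    simp
  have hsum : ∀ (i : Fin (n+1)) (x : Fin n → ℕ),
      (∑ j, Fin.insertNth (α := fun _ => ℕ) i b x j) = b + ∑ j, x j := by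
    intro i x
    rw [Fin.sum_univ_succAbove _ i]
    simp
  have step1 : ∑ y ∈ (Finset.Nat.antidiagonalTuple (n+1) (b+s)).filter (fun y => ∃ i, y i = b),
        ∏ i, g (y i)
      = ∑ y ∈ (Finset.Nat.antidiagonalTuple (n+1) (b+s)).filter (fun y => ∃ i, y i = b),
          ∑ i ∈ univ.filter (fun i => y i = b),
            (∏ j, g (y j)) / ((univ.filter (fun j => y j = b)).card : ℂ) := by
    refine Finset.sum_congr rfl fun y hy => ?_
    rw [Finset.sum_const, nsmul_eq_mul]
    have hpos : 0 < (univ.filter (fun j => y j = b)).card := by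
      rw [Finset.mem_filter] at hy
      obtain ⟨i, hi⟩ := hy.2
      exact Finset.card_pos.mpr ⟨i, by simp [hi]⟩
    have hne : ((univ.filter (fun j => y j = b)).card : ℂ) ≠ 0 := by
      exact_mod_cast Nat.cast_ne_zero.mpr hpos.ne'
    rw [mul_comm, div_mul_cancel₀ _ hne]
  rw [step1]
  rw [Finset.sum_sigma']
  have step2 : (n+1 : ℂ) * g b * ∑ x ∈ Finset.Nat.antidiagonalTuple n s,
        (∏ i, g (x i)) / (((univ.filter (fun i => x i = b)).card : ℂ) + 1)
      = ∑ p ∈ (univ : Finset (Fin (n+1))).sigma (fun _ => Finset.Nat.antidiagonalTuple n s),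
          g b * ((∏ i, g (p.2 i)) / (((univ.filter (fun i => p.2 i = b)).card : ℂ) + 1)) := by
    simp [Finset.sum_sigma, Finset.mul_sum, mul_assoc]
  rw [step2]
  refine Finset.sum_nbij' (fun p => ⟨p.2, p.2.removeNth p.1⟩)
    (fun p => ⟨Fin.insertNth (α := fun _ => ℕ) p.1 b p.2, p.1⟩) ?_ ?_ ?_ ?_ ?_
  · rintro ⟨y, i⟩ hp
    simp only [Finset.mem_sigma, Finset.mem_filter, Finset.mem_univ,
      Finset.Nat.mem_antidiagonalTuple, true_and] at hp ⊢
    obtain ⟨⟨hsumy, -⟩, hyi⟩ := hp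
    have := hsum i (i.removeNth y)
    rw [← hyi, Fin.insertNth_self_removeNth] at this
    omega
  · rintro ⟨i, x⟩ hp
    simp only [Finset.mem_sigma, Finset.mem_filter, Finset.mem_univ,
      Finset.Nat.mem_antidiagonalTuple, true_and] at hp ⊢
    refine ⟨⟨by rw [hsum]; omega, ⟨i, by simp⟩⟩, by simp⟩
  · rintro ⟨y, i⟩ hp
    simp only [Finset.mem_sigma, Finset.mem_filter, Finset.mem_univ, true_and] at hp
    have hyi := hp.2
    simp only [Sigma.mk.inj_iff]
    constructor
    · rw [← hyi, Fin.insertNth_self_removeNth]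
    · rfl
  · rintro ⟨i, x⟩ hp
    simp [Fin.removeNth_insertNth]
  · rintro ⟨y, i⟩ hp
    simp only [Finset.mem_sigma, Finset.mem_filter, Finset.mem_univ, true_and] at hp
    have hyi := hp.2
    have hy' : Fin.insertNth (α := fun _ => ℕ) i b (i.removeNth y) = y := by
      rw [← hyi, Fin.insertNth_self_removeNth]
    simp only
    have h1 := hprod i (i.removeNth y)
    have h2 := hcard i (i.removeNth y)
    rw [hy'] at h1 h2
    rw [h1, h2]
    push_cast
    ring

lemma pick_aux {ζ : ℂ} {N : ℕ} (hN : N ≠ 0) (prim : IsPrimitiveRoot ζ N)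
    (d : ℤ) (hd : |d| < (N : ℤ)) :
    ∑ a ∈ Finset.range N, (ζ ^ d) ^ a = if d = 0 then (N : ℂ) else 0 := by
  by_cases h : d = 0
  · subst h
    simp
  · rw [if_neg h]
    have hζ1 : ζ ^ d ≠ 1 := by
      intro he
      have hdvd : (N : ℤ) ∣ d := (prim.zpow_eq_one_iff_dvd d).1 he
      have : (N : ℤ) ≤ |d| := Int.le_of_dvd (abs_pos.2 h) ((dvd_abs _ _).mpr hdvd)
      omega
    have hζN : (ζ ^ d) ^ N = 1 := by
      rw [← zpow_natCast (ζ ^ d) N, ← zpow_mul, mul_comm d (N : ℤ), zpow_mul, zpow_natCast,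
        prim.pow_eq_one, one_zpow]
    rw [geom_sum_eq hζ1, hζN]
    simp

lemma int_aux (qz cz bz Nz ℓ t : ℤ) (hbc : bz ≤ cz) (hb1 : 1 ≤ ℓ)
    (hlq : ℓ ≤ qz) (hlow : bz ≤ t) (hup : t ≤ ℓ * bz + (qz - ℓ) * (cz - bz))
    (h1 : cz - bz < Nz) (h2 : |cz - bz * qz| < Nz) (h3 : (cz - bz) * (qz - 2) < Nz) :
    |cz - t| < Nz := by
  rw [abs_lt] at h2 ⊢
  constructor
  · rcases le_total bz (cz - bz) with h | h
    · nlinarith [mul_nonneg (by linarith : (0:ℤ) ≤ ℓ - 1) (by linarith : (0:ℤ) ≤ (cz - bz) - bz)]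
    · nlinarith [mul_nonneg (by linarith : (0:ℤ) ≤ qz - ℓ) (by linarith : (0:ℤ) ≤ bz - (cz - bz))]
  · linarith

lemma int_aux' (q' c b Nb ℓ t : ℕ) (hbc : b ≤ c) (hb1 : 1 ≤ ℓ) (hlq : ℓ ≤ q')
    (hlow : b ≤ t) (hup : t ≤ ℓ * b + (q' - ℓ) * (c - b))
    (h1 : (c:ℤ) - b < Nb) (h2 : |(c:ℤ) - b * ((q' : ℕ) : ℤ)| < Nb)
    (h3 : ((c:ℤ) - b) * (((q' : ℕ) : ℤ) - 2) < Nb) :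
    |(c:ℤ) - (t : ℤ)| < Nb := by
  have hupZ : (t : ℤ) ≤ (ℓ:ℤ) * b + ((q':ℤ) - ℓ) * ((c:ℤ) - b) := by
    have h' : (t : ℤ) ≤ ((ℓ * b + (q' - ℓ) * (c - b) : ℕ) : ℤ) := by exact_mod_cast hup
    refine le_trans h' ?_
    push_cast [Nat.cast_sub hlq, Nat.cast_sub hbc]
    exact le_of_eq (by ring)
  exact int_aux q' c b Nb ℓ t (by exact_mod_cast hbc) (by exact_mod_cast hb1)
    (by exact_mod_cast hlq) (by exact_mod_cast hlow) hupZ h1 h2 h3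

set_option maxHeartbeats 1000000 in
theorem stmt_aux (n c b : ℕ) (hn : 1 ≤ n) (hc : 1 ≤ c) (hb : 1 ≤ b) (hbc : b ≤ c)
    (κ : ℝ) (hκ : 0 < κ) (w : ℕ → ℝ) (W : ℕ → ℕ → ℝ)
    (Nb : ℕ)
    (hNb : max ((c : ℤ) - b) (max |(c : ℤ) - b * ((n+1 : ℕ) : ℤ)|
        (((c : ℤ) - b) * (((n+1 : ℕ) : ℤ) - 2))) < (Nb : ℤ)) :
    ((∑' x : {x : Fin n → ℕ // ∑ i, x i = c - b},
        ((Nat.multinomial Finset.univ x.1 : ℝ)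
            * GBeta (fun i => κ + x.1 i) / GBeta (fun _ : Fin n => κ))
          * ((w b / ((Finset.univ.filter (fun i => x.1 i = b)).card + 1))
              * ∏ i ∈ Finset.univ.filter (fun i => x.1 i ≠ b), W b (x.1 i)) : ℝ) : ℂ)
      = (((Nat.factorial b : ℂ) * (Nat.factorial (c - b) : ℂ) * ((w b : ℝ) : ℂ))
            / (((n+1 : ℕ) : ℂ) * (Nb : ℂ)
                * ((Real.Gamma (κ + b) * Real.Gamma (((c : ℝ) - b) + κ * (((n+1 : ℕ) : ℝ) - 1))
                      * GBeta (fun _ : Fin n => κ) : ℝ) : ℂ)))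
          * ∑ a ∈ Finset.range Nb,
              Complex.exp (2 * Real.pi * Complex.I / Nb) ^ (a * c)
                * (((∑ z ∈ (Finset.range (c - b + 1)).erase b,
                        ((Real.Gamma (κ + z) * W b z : ℝ) : ℂ)
                          / (Complex.exp (2 * Real.pi * Complex.I / Nb) ^ (a * z)
                              * (Nat.factorial z : ℂ)))
                      + ((Real.Gamma (κ + b) : ℝ) : ℂ)
                          / (Complex.exp (2 * Real.pi * Complex.I / Nb) ^ (a * b)
                              * (Nat.factorial b : ℂ))) ^ (n+1)
                    - (∑ z ∈ (Finset.range (c - b + 1)).erase b,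
                        ((Real.Gamma (κ + z) * W b z : ℝ) : ℂ)
                          / (Complex.exp (2 * Real.pi * Complex.I / Nb) ^ (a * z)
                              * (Nat.factorial z : ℂ))) ^ (n+1)) := by
  -- basic facts about Nb
  have hbcZ : (b : ℤ) ≤ (c : ℤ) := by exact_mod_cast hbc
  have h1 : (c : ℤ) - b < Nb := lt_of_le_of_lt (le_max_left _ _) hNb
  have h2 : |(c : ℤ) - b * ((n+1 : ℕ) : ℤ)| < Nb :=
    lt_of_le_of_lt (le_trans (le_max_left _ _) (le_max_right _ _)) hNb
  have h3 : ((c : ℤ) - b) * (((n+1 : ℕ) : ℤ) - 2) < Nb :=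
    lt_of_le_of_lt (le_trans (le_max_right _ _) (le_max_right _ _)) hNb
  have hNb0 : Nb ≠ 0 := by
    have : (0 : ℤ) < Nb := lt_of_le_of_lt (by omega) h1
    omega
  set ω := Complex.exp (2 * Real.pi * Complex.I / Nb) with hωdef
  have hωne : ω ≠ 0 := Complex.exp_ne_zero _
  have prim : IsPrimitiveRoot ω Nb := Complex.isPrimitiveRoot_exp Nb hNb0
  set S' := (Finset.range (c - b + 1)).erase b with hS'
  set T := insert b S' with hT
  set g : ℕ → ℝ := fun z => Real.Gamma (κ + z) * (if z = b then 1 else W b z) / z.factorial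
    with hg
  set D := Fintype.piFinset (fun _ : Fin (n+1) => T) \
    Fintype.piFinset (fun _ : Fin (n+1) => S') with hD
  -- positivity facts
  have hGB2 : 0 < GBeta (fun _ : Fin n => κ) := by
    unfold GBeta
    refine div_pos (Finset.prod_pos fun i _ => Real.Gamma_pos_of_pos hκ)
      (Real.Gamma_pos_of_pos ?_)
    rw [Finset.sum_const, Finset.card_univ, Fintype.card_fin, nsmul_eq_mul]
    have : (0:ℝ) < (n:ℝ) := by exact_mod_cast Nat.pos_of_ne_zero (by omega)
    positivity
  have hGam2 : 0 < Real.Gamma ((c:ℝ) - b + κ * ((↑(n+1):ℝ) - 1)) := by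
    apply Real.Gamma_pos_of_pos
    have h0 : (0:ℝ) ≤ (c:ℝ) - b := by
      have : (b:ℝ) ≤ c := by exact_mod_cast hbc
      linarith
    have h0' : (0:ℝ) < (↑(n+1):ℝ) - 1 := by
      push_cast
      have : (1:ℝ) ≤ (n:ℝ) := by exact_mod_cast hn
      linarith
    nlinarith
  have hGam1 : 0 < Real.Gamma (κ + b) := Real.Gamma_pos_of_pos (by positivity)
  -- the LHS
  letI instF : Fintype {x : Fin n → ℕ // ∑ i, x i = c - b} :=
    Fintype.subtype (Finset.Nat.antidiagonalTuple n (c - b))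
      (fun x => Finset.Nat.mem_antidiagonalTuple)
  rw [tsum_fintype]
  rw [← Finset.sum_subtype (Finset.Nat.antidiagonalTuple n (c - b))
      (fun x => Finset.Nat.mem_antidiagonalTuple)
      (fun x : Fin n → ℕ =>
        ((Nat.multinomial Finset.univ x : ℝ)
            * GBeta (fun i => κ + x i) / GBeta (fun _ : Fin n => κ))
          * ((w b / ((Finset.univ.filter (fun i => x i = b)).card + 1))
              * ∏ i ∈ Finset.univ.filter (fun i => x i ≠ b), W b (x i)))]
  -- rewrite each LHS term
  have hterm : ∀ x ∈ Finset.Nat.antidiagonalTuple n (c - b),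
      ((Nat.multinomial Finset.univ x : ℝ)
          * GBeta (fun i => κ + x i) / GBeta (fun _ : Fin n => κ))
        * ((w b / ((Finset.univ.filter (fun i => x i = b)).card + 1))
            * ∏ i ∈ Finset.univ.filter (fun i => x i ≠ b), W b (x i))
      = ((c - b).factorial * w b
          / (Real.Gamma ((c:ℝ) - b + κ * ((↑(n+1):ℝ) - 1)) * GBeta (fun _ : Fin n => κ)))
        * ((∏ i, g (x i)) / (((Finset.univ.filter (fun i => x i = b)).card : ℝ) + 1)) := by
    intro x hx
    rw [Finset.Nat.mem_antidiagonalTuple] at hx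
    have hPpos : (0:ℝ) < ∏ i, ((x i).factorial : ℝ) := by positivity
    have hmult : (Nat.multinomial Finset.univ x : ℝ)
        = ((c - b).factorial : ℝ) / ∏ i, ((x i).factorial : ℝ) := by
      have hspec := Nat.multinomial_spec Finset.univ x
      rw [hx] at hspec
      rw [eq_div_iff hPpos.ne']
      rw [mul_comm]
      exact_mod_cast congrArg (Nat.cast (R := ℝ)) hspec
    have hGB1 : GBeta (fun i => κ + x i)
        = (∏ i, Real.Gamma (κ + x i)) / Real.Gamma ((c:ℝ) - b + κ * ((↑(n+1):ℝ) - 1)) := by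
      unfold GBeta
      congr 2
      rw [Finset.sum_add_distrib, Finset.sum_const, Finset.card_univ, Fintype.card_fin,
        nsmul_eq_mul]
      have hxc : (∑ i, ((x i : ℕ) : ℝ)) = ((c - b : ℕ) : ℝ) := by
        rw [← Nat.cast_sum, hx]
      rw [hxc]
      push_cast [Nat.cast_sub hbc]
      ring
    have hgprod : ∏ i, g (x i)
        = (∏ i, Real.Gamma (κ + x i))
          * (∏ i ∈ Finset.univ.filter (fun i => x i ≠ b), W b (x i))
          / ∏ i, ((x i).factorial : ℝ) := by
      simp only [hg]
      rw [Finset.prod_div_distrib, Finset.prod_mul_distrib, Finset.prod_ite,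
        Finset.prod_const_one, one_mul]
    rw [hmult, hGB1, hgprod]
    ring
  rw [Finset.sum_congr rfl hterm, ← Finset.mul_sum]
  -- the RHS sum
  have key_a : ∀ a ∈ Finset.range Nb,
      ω ^ (a * c) *
        (((∑ z ∈ S', ((Real.Gamma (κ + z) * W b z : ℝ) : ℂ)
              / (ω ^ (a * z) * (Nat.factorial z : ℂ)))
            + ((Real.Gamma (κ + b) : ℝ) : ℂ) / (ω ^ (a * b) * (Nat.factorial b : ℂ))) ^ (n+1)
          - (∑ z ∈ S', ((Real.Gamma (κ + z) * W b z : ℝ) : ℂ)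
              / (ω ^ (a * z) * (Nat.factorial z : ℂ))) ^ (n+1))
      = ∑ y ∈ D, ((∏ i, g (y i) : ℝ) : ℂ) * (ω ^ ((c:ℤ) - (∑ i, y i : ℕ))) ^ a := by
    intro a _
    have hzS : ∀ z ∈ S', ((Real.Gamma (κ + z) * W b z : ℝ) : ℂ)
        / (ω ^ (a * z) * (Nat.factorial z : ℂ)) = ((g z : ℝ) : ℂ) / ω ^ (a * z) := by
      intro z hz
      have hzb : z ≠ b := Finset.ne_of_mem_erase hz
      simp only [hg, if_neg hzb]
      push_cast
      rw [div_div, mul_comm ((Nat.factorial z : ℂ)) (ω ^ (a * z))]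
    have hzb' : ((Real.Gamma (κ + b) : ℝ) : ℂ) / (ω ^ (a * b) * (Nat.factorial b : ℂ))
        = ((g b : ℝ) : ℂ) / ω ^ (a * b) := by
      simp only [hg, eq_self_iff_true, if_true, mul_one]
      push_cast
      rw [div_div, mul_comm ((Nat.factorial b : ℂ)) (ω ^ (a * b))]
    rw [Finset.sum_congr rfl hzS, hzb']
    have hins : (∑ z ∈ S', ((g z : ℝ) : ℂ) / ω ^ (a * z)) + ((g b : ℝ) : ℂ) / ω ^ (a * b)
        = ∑ z ∈ T, ((g z : ℝ) : ℂ) / ω ^ (a * z) := by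
      rw [hT, Finset.sum_insert (Finset.notMem_erase b _)]
      ring
    rw [hins]
    have hexp : ∀ P : Finset ℕ, (∑ z ∈ P, ((g z : ℝ) : ℂ) / ω ^ (a * z)) ^ (n+1)
        = ∑ y ∈ Fintype.piFinset (fun _ : Fin (n+1) => P),
            ∏ i, ((g (y i) : ℝ) : ℂ) / ω ^ (a * y i) := by
      intro P
      have : (∑ z ∈ P, ((g z : ℝ) : ℂ) / ω ^ (a * z)) ^ (n+1)
          = ∏ _i : Fin (n+1), ∑ z ∈ P, ((g z : ℝ) : ℂ) / ω ^ (a * z) := by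
        rw [Finset.prod_const, Finset.card_univ, Fintype.card_fin]
      rw [this, Finset.prod_univ_sum]
    rw [hexp T, hexp S',
      ← Finset.sum_sdiff_eq_sub
        (Fintype.piFinset_subset _ _ (fun _ => Finset.subset_insert b S')), ← hD, Finset.mul_sum]
    refine Finset.sum_congr rfl fun y hy => ?_
    have hprody : (∏ i, (((g (y i) : ℝ) : ℂ) / ω ^ (a * y i)))
        = ((∏ i, g (y i) : ℝ) : ℂ) / ω ^ (a * ∑ i, y i) := by
      rw [Finset.prod_div_distrib]
      congr 1
      · push_cast
        rfl
      · rw [Finset.prod_pow_eq_pow_sum, Finset.mul_sum]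
    rw [hprody]
    have h2' : ω ^ (a * c) / ω ^ (a * (∑ i, y i)) = (ω ^ ((c:ℤ) - (∑ i, y i : ℕ))) ^ a := by
      rw [← zpow_natCast ω (a * c), ← zpow_natCast ω (a * ∑ i, y i), ← zpow_sub₀ hωne,
        ← zpow_natCast (ω ^ ((c:ℤ) - (∑ i, y i : ℕ))) a, ← zpow_mul]
      congr 1
      push_cast
      ring
    rw [← h2']
    ring
  rw [Finset.sum_congr rfl key_a, Finset.sum_comm]
  -- bound for y in D
  have hbound : ∀ y ∈ D, |(c:ℤ) - (∑ i, y i : ℕ)| < (Nb:ℤ) := by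
    intro y hy
    rw [hD, Finset.mem_sdiff] at hy
    obtain ⟨hTmem, hnS⟩ := hy
    rw [Fintype.mem_piFinset] at hTmem
    have hex : ∃ i, y i = b := by
      by_contra hcon
      push_neg at hcon
      refine hnS (Fintype.mem_piFinset.mpr fun i => ?_)
      have := hTmem i
      rw [hT, Finset.mem_insert] at this
      rcases this with h | h
      · exact absurd h (hcon i)
      · exact h
    obtain ⟨i0, hi0⟩ := hex
    have hcoord : ∀ i, y i = b ∨ y i ≤ c - b := by
      intro i
      have := hTmem i
      rw [hT, Finset.mem_insert] at this
      rcases this with h | h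
      · exact Or.inl h
      · rw [hS', Finset.mem_erase, Finset.mem_range] at h
        omega
    set ℓ := (Finset.univ.filter (fun i => y i = b)).card with hℓ
    have hℓ1 : 1 ≤ ℓ := by
      refine Finset.card_pos.mpr ⟨i0, ?_⟩
      simp [hi0]
    have hℓq : ℓ ≤ n + 1 := le_trans (Finset.card_filter_le _ _) (by simp)
    have hlow : b ≤ ∑ i, y i := by
      calc b = y i0 := hi0.symm
        _ ≤ ∑ i, y i := Finset.single_le_sum (fun i _ => Nat.zero_le _) (Finset.mem_univ i0)
    have hupN : ∑ i, y i ≤ ℓ * b + (n + 1 - ℓ) * (c - b) := by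
      rw [← Finset.sum_filter_add_sum_filter_not Finset.univ (fun i => y i = b) y]
      have e1 : ∑ i ∈ Finset.univ.filter (fun i => y i = b), y i = ℓ * b := by
        rw [Finset.sum_congr rfl (fun i hi => (Finset.mem_filter.1 hi).2), Finset.sum_const,
          smul_eq_mul]
      have e2 : ∑ i ∈ Finset.univ.filter (fun i => ¬ y i = b), y i ≤ (n + 1 - ℓ) * (c - b) := by
        have hb2 : ∀ i ∈ Finset.univ.filter (fun i => ¬ y i = b), y i ≤ c - b := by
          intro i hi
          have h' := hcoord i
          have h'' := (Finset.mem_filter.1 hi).2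
          tauto
        have := Finset.sum_le_card_nsmul _ _ _ hb2
        have hcardnot : (Finset.univ.filter (fun i => ¬ y i = b)).card = n + 1 - ℓ := by
          have hadd := Finset.card_filter_add_card_filter_not
            (s := (Finset.univ : Finset (Fin (n+1)))) (p := fun i => y i = b)
          rw [Finset.card_univ, Fintype.card_fin] at hadd
          omega
        rw [hcardnot, smul_eq_mul] at this
        exact this
      omega
    exact int_aux' (n+1) c b Nb ℓ (∑ i, y i) hbc hℓ1 hℓq hlow hupN h1 h2 h3
  -- evaluate the inner geometric sums
  have key_y : ∀ y ∈ D,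
      (∑ a ∈ Finset.range Nb, ((∏ i, g (y i) : ℝ) : ℂ) * (ω ^ ((c:ℤ) - (∑ i, y i : ℕ))) ^ a)
      = if (∑ i, y i) = c then (Nb:ℂ) * ((∏ i, g (y i) : ℝ) : ℂ) else 0 := by
    intro y hy
    rw [← Finset.mul_sum, pick_aux hNb0 prim ((c:ℤ) - (∑ i, y i : ℕ)) (hbound y hy)]
    by_cases h : (∑ i, y i) = c
    · rw [if_pos (by omega : (c:ℤ) - (∑ i, y i : ℕ) = 0), if_pos h]
      ring
    · rw [if_neg (by omega : ¬ ((c:ℤ) - (∑ i, y i : ℕ) = 0)), if_neg h, mul_zero]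
  rw [Finset.sum_congr rfl key_y]
  rw [Finset.sum_ite, Finset.sum_const_zero, add_zero, ← Finset.mul_sum]
  -- identify the filtered set with the antidiagonal tuple filter
  have hseteq : D.filter (fun y => (∑ i, y i) = c)
      = (Finset.Nat.antidiagonalTuple (n+1) (b + (c - b))).filter (fun y => ∃ i, y i = b) := by
    ext y
    simp only [Finset.mem_filter, hD, Finset.mem_sdiff, Fintype.mem_piFinset,
      Finset.Nat.mem_antidiagonalTuple]
    constructor
    · rintro ⟨⟨hTmem, hnS⟩, hsum⟩
      refine ⟨by omega, ?_⟩
      by_contra hcon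
      push_neg at hcon
      refine hnS (fun i => ?_)
      have := hTmem i
      rw [hT, Finset.mem_insert] at this
      rcases this with h | h
      · exact absurd h (hcon i)
      · exact h
    · rintro ⟨hsum, ⟨j, hj⟩⟩
      have hcb : b + (c - b) = c := by omega
      rw [hcb] at hsum
      refine ⟨⟨fun i => ?_, fun hall => ?_⟩, hsum⟩
      · rw [hT, Finset.mem_insert]
        by_cases hib : y i = b
        · exact Or.inl hib
        · refine Or.inr ?_
          rw [hS', Finset.mem_erase, Finset.mem_range]
          refine ⟨hib, ?_⟩
          have hij : i ≠ j := fun he => hib (he ▸ hj)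
          have hmem : i ∈ Finset.univ.erase j := Finset.mem_erase.mpr ⟨hij, Finset.mem_univ i⟩
          have hle : y i ≤ ∑ k ∈ Finset.univ.erase j, y k :=
            Finset.single_le_sum (fun k _ => Nat.zero_le _) hmem
          have hsplit : (∑ k ∈ Finset.univ.erase j, y k) + y j = ∑ k, y k :=
            Finset.sum_erase_add _ _ (Finset.mem_univ j)
          omega
      · have := hall j
        rw [hS', Finset.mem_erase] at this
        exact this.1 hj
  rw [hseteq]
  have hcast : ∀ y ∈ (Finset.Nat.antidiagonalTuple (n+1) (b + (c - b))).filter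
      (fun y => ∃ i, y i = b),
      ((∏ i, g (y i) : ℝ) : ℂ) = ∏ i, ((g (y i) : ℝ) : ℂ) := by
    intro y _
    push_cast
    rfl
  rw [Finset.sum_congr rfl hcast, count_aux n b (c - b) (fun z => ((g z : ℝ) : ℂ))]
  -- final scalar identity
  have hER : ((∑ x ∈ Finset.Nat.antidiagonalTuple n (c - b),
        (∏ i, g (x i)) / (((Finset.univ.filter (fun i => x i = b)).card : ℝ) + 1) : ℝ) : ℂ)
      = ∑ x ∈ Finset.Nat.antidiagonalTuple n (c - b),
          (∏ i, ((g (x i) : ℝ) : ℂ)) / (((Finset.univ.filter (fun i => x i = b)).card : ℂ) + 1) := by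
    push_cast
    rfl
  rw [Complex.ofReal_mul, hER]
  generalize (∑ x ∈ Finset.Nat.antidiagonalTuple n (c - b),
      (∏ i, ((g (x i) : ℝ) : ℂ)) / (((Finset.univ.filter (fun i => x i = b)).card : ℂ) + 1)) = E
  have hgb : g b = Real.Gamma (κ + b) / (Nat.factorial b : ℝ) := by
    simp [hg]
  rw [hgb]
  have hfacb : ((Nat.factorial b : ℝ)) ≠ 0 := by positivity
  have hNbC : ((Nb:ℂ)) ≠ 0 := by exact_mod_cast Nat.cast_ne_zero.mpr hNb0
  have hnC : (((n+1:ℕ)):ℂ) ≠ 0 := Nat.cast_ne_zero.mpr (by omega)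
  have hG1 : Real.Gamma (κ + b) ≠ 0 := hGam1.ne'
  have hG2 : Real.Gamma ((c:ℝ) - b + κ * ((↑(n+1):ℝ) - 1)) ≠ 0 := hGam2.ne'
  have hGB2' : GBeta (fun _ : Fin n => κ) ≠ 0 := hGB2.ne'
  have hG1' : ((Real.Gamma (κ + b) : ℝ) : ℂ) ≠ 0 := by exact_mod_cast hG1
  have hG2' : ((Real.Gamma ((c:ℝ) - b + κ * ((↑(n+1):ℝ) - 1)) : ℝ) : ℂ) ≠ 0 := by
    exact_mod_cast hG2
  have hGB2'' : ((GBeta (fun _ : Fin n => κ) : ℝ) : ℂ) ≠ 0 := by exact_mod_cast hGB2'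
  have hfacb' : ((Nat.factorial b : ℝ) : ℂ) ≠ 0 := by exact_mod_cast hfacb
  have hbig : ((Real.Gamma (κ + b) * Real.Gamma ((c:ℝ) - b + κ * ((↑(n+1):ℝ) - 1))
      * GBeta (fun _ : Fin n => κ) : ℝ) : ℂ) ≠ 0 := by
    exact Complex.ofReal_ne_zero.mpr (mul_ne_zero (mul_ne_zero hG1 hG2) hGB2')
  rw [div_mul_eq_mul_div, eq_div_iff (mul_ne_zero (mul_ne_zero hnC hNbC) hbig)]
  push_cast
  have harg : ((c:ℝ) - ↑b + κ * ((n:ℝ) + 1 - 1)) = ((c:ℝ) - b + κ * ((↑(n+1):ℝ) - 1)) := by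
    push_cast
    ring
  have i1 : ((Real.Gamma ((c:ℝ) - ↑b + κ * ((n:ℝ) + 1 - 1)) : ℝ) : ℂ)
        * ((GBeta fun _ : Fin n => κ : ℝ) : ℂ)
        * (((Real.Gamma ((c:ℝ) - ↑b + κ * ((n:ℝ) + 1 - 1)) : ℝ) : ℂ)
            * ((GBeta fun _ : Fin n => κ : ℝ) : ℂ))⁻¹ = 1 :=
    mul_inv_cancel₀ (by rw [harg]; exact mul_ne_zero hG2' hGB2'')
  have i2 : ((Nat.factorial b : ℕ) : ℂ) * (((Nat.factorial b : ℕ) : ℂ))⁻¹ = 1 :=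
    mul_inv_cancel₀ (Nat.cast_ne_zero.mpr (Nat.factorial_ne_zero b))
  linear_combination ((((c-b).factorial : ℕ) : ℂ) * ((w b : ℝ) : ℂ) * E * ((n:ℂ)+1) * (Nb:ℂ)
      * ((Real.Gamma (κ + (b:ℝ)) : ℝ) : ℂ)) * i1
    - ((((c-b).factorial : ℕ) : ℂ) * ((w b : ℝ) : ℂ) * E * ((n:ℂ)+1) * (Nb:ℂ)
      * ((Real.Gamma (κ + (b:ℝ)) : ℝ) : ℂ)) * i2

theorem stmt_17 (q c b : ℕ) (hq : 2 ≤ q) (hc : 1 ≤ c) (hb : 1 ≤ b) (hbc : b ≤ c)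
    (κ : ℝ) (hκ : 0 < κ) (w : ℕ → ℝ) (W : ℕ → ℕ → ℝ)
    (Nb : ℕ)
    (hNb : max ((c : ℤ) - b) (max |(c : ℤ) - b * q| (((c : ℤ) - b) * ((q : ℤ) - 2)))
        < (Nb : ℤ)) :
    ((∑' x : {x : Fin (q - 1) → ℕ // ∑ i, x i = c - b},
        ((Nat.multinomial Finset.univ x.1 : ℝ)
            * GBeta (fun i => κ + x.1 i) / GBeta (fun _ : Fin (q - 1) => κ))
          * ((w b / ((Finset.univ.filter (fun i => x.1 i = b)).card + 1))
              * ∏ i ∈ Finset.univ.filter (fun i => x.1 i ≠ b), W b (x.1 i)) : ℝ) : ℂ)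
      = (((Nat.factorial b : ℂ) * (Nat.factorial (c - b) : ℂ) * ((w b : ℝ) : ℂ))
            / ((q : ℂ) * (Nb : ℂ)
                * ((Real.Gamma (κ + b) * Real.Gamma (((c : ℝ) - b) + κ * ((q : ℝ) - 1))
                      * GBeta (fun _ : Fin (q - 1) => κ) : ℝ) : ℂ)))
          * ∑ a ∈ Finset.range Nb,
              Complex.exp (2 * Real.pi * Complex.I / Nb) ^ (a * c)
                * (((∑ z ∈ (Finset.range (c - b + 1)).erase b,
                        ((Real.Gamma (κ + z) * W b z : ℝ) : ℂ)
                          / (Complex.exp (2 * Real.pi * Complex.I / Nb) ^ (a * z)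
                              * (Nat.factorial z : ℂ)))
                      + ((Real.Gamma (κ + b) : ℝ) : ℂ)
                          / (Complex.exp (2 * Real.pi * Complex.I / Nb) ^ (a * b)
                              * (Nat.factorial b : ℂ))) ^ q
                    - (∑ z ∈ (Finset.range (c - b + 1)).erase b,
                        ((Real.Gamma (κ + z) * W b z : ℝ) : ℂ)
                          / (Complex.exp (2 * Real.pi * Complex.I / Nb) ^ (a * z)
                              * (Nat.factorial z : ℂ))) ^ q) := by
  obtain ⟨n, rfl⟩ : ∃ n, q = n + 1 := ⟨q - 1, by omega⟩
  exact stmt_aux n c b (by omega) hc hb hbc κ hκ w W Nb hNb
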